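/- arXiv:1907.00927 — 6 statements merged into one kernel-verified Lean document; each statement's English description precedes it below -/
import Mathlib

section
/- Let P be a real-valued distribution with mean μ, variance at most σ², and bounded 2k-th moments in the sense that E[(x-μ)^{2k}] ≤ C_{2k} σ^{2k}. Then for any event A with P(A) ≥ 1-ε ≥ 1/2, the conditional mean satisfies |E[x | A] - μ| ≤ 2 C_{2k}^{1/(2k)} σ ε^{1 - 1/(2k)}. -/
open MeasureTheory

/-- Mean shift under conditioning, for a real distribution with bounded `2k`-th moments. -/
theorem conditional_mean_shift_1d
    (P : Measure ℝ) [IsProbabilityMeasure P]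
    (μ σ C ε : ℝ) (k : ℕ) (hk : 1 ≤ k) (hσ : 0 ≤ σ) (hC : 0 ≤ C)
    (hint : Integrable id P)
    (hmean : ∫ x, x ∂P = μ)
    (hmom_int : Integrable (fun x => (x - μ) ^ (2 * k)) P)
    (hmom : ∫ x, (x - μ) ^ (2 * k) ∂P ≤ C * σ ^ (2 * k))
    (A : Set ℝ) (hA : MeasurableSet A)
    (hε0 : 0 ≤ ε) (hε : ε ≤ 1 / 2)
    (hPA : 1 - ε ≤ (P A).toReal) :
    |(∫ x in A, x ∂P) / (P A).toReal - μ| ≤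
      2 * C ^ ((1 : ℝ) / (2 * k)) * σ * ε ^ (1 - 1 / (2 * (k : ℝ))) := by
  have hk1 : (1 : ℝ) ≤ (k : ℝ) := by exact_mod_cast hk
  set p : ℝ := 2 * (k : ℝ) with hp_def
  have hp1 : 1 < p := by simp only [hp_def]; nlinarith
  have hp0 : 0 < p := by linarith
  set q : ℝ := Real.conjExponent p with hq_def
  have hpq : p.HolderConjugate q := Real.HolderConjugate.conjExponent hp1
  have hq0 : 0 < q := hpq.symm.pos
  have hq_inv : 1 / q = 1 - 1 / p := by
    have := hpq.inv_add_inv_eq_one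
    rw [one_div, one_div]; linarith
  set m := (P A).toReal with hm_def
  have hm : (1 : ℝ) / 2 ≤ m := le_trans (by linarith) hPA
  have hm0 : 0 < m := by linarith
  have hAc : MeasurableSet Aᶜ := hA.compl
  have hPAc : (P Aᶜ).toReal ≤ ε := by
    have h1 : P Aᶜ = 1 - P A := prob_compl_eq_one_sub hA
    have h2 : (P Aᶜ).toReal = 1 - m := by
      rw [h1, ENNReal.toReal_sub_of_le prob_le_one ENNReal.one_ne_top, ENNReal.toReal_one]
    linarith
  have hPAc0 : 0 ≤ (P Aᶜ).toReal := ENNReal.toReal_nonneg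
  have hint' : Integrable (fun x => x - μ) P := hint.sub (integrable_const μ)
  -- pointwise identity for the 2k-th power
  have key : ∀ y : ℝ, |y| ^ p = y ^ (2 * k) := by
    intro y
    have h2k : p = ((2 * k : ℕ) : ℝ) := by push_cast [hp_def]; ring
    rw [h2k, Real.rpow_natCast, pow_abs, abs_of_nonneg ((even_two_mul k).pow_nonneg y)]
  -- Memℒp facts
  have hfmem : MemLp (fun x => x - μ) (ENNReal.ofReal p) P := by
    have hne0 : ENNReal.ofReal p ≠ 0 := by
      simp [ENNReal.ofReal_eq_zero, not_le, hp0]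
    refine (memLp_norm_rpow_iff (q := ENNReal.ofReal p) (p := ENNReal.ofReal p)
      hint'.aestronglyMeasurable hne0 ENNReal.ofReal_ne_top).mp ?_
    rw [ENNReal.div_self hne0 ENNReal.ofReal_ne_top]
    rw [memLp_one_iff_integrable]
    refine hmom_int.congr ?_
    filter_upwards with x
    rw [ENNReal.toReal_ofReal hp0.le, Real.norm_eq_abs, key (x - μ)]
  have hfabs : MemLp (fun x => |x - μ|) (ENNReal.ofReal p) P := by
    simpa [Real.norm_eq_abs] using hfmem.norm
  have hgmem : MemLp (Aᶜ.indicator (fun _ => (1 : ℝ))) (ENNReal.ofReal q) P :=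
    memLp_indicator_const _ hAc 1 (Or.inr (measure_ne_top P Aᶜ))
  -- Hölder
  have holder := integral_mul_le_Lp_mul_Lq_of_nonneg (μ := P) hpq
    (Filter.Eventually.of_forall fun x => abs_nonneg (x - μ))
    (Filter.Eventually.of_forall fun x => Set.indicator_nonneg (fun _ _ => zero_le_one) x)
    hfabs hgmem
  -- rewrite the three integrals
  have hI1 : ∫ x, |x - μ| * Aᶜ.indicator (fun _ => (1 : ℝ)) x ∂P
      = ∫ x in Aᶜ, |x - μ| ∂P := by
    rw [← integral_indicator hAc]
    congr 1 with x
    by_cases hx : x ∈ Aᶜ <;> simp [hx]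
  have hI2 : ∫ x, |x - μ| ^ p ∂P ≤ C * σ ^ (2 * k) := by
    calc ∫ x, |x - μ| ^ p ∂P = ∫ x, (x - μ) ^ (2 * k) ∂P := by
          congr 1 with x; exact key (x - μ)
      _ ≤ C * σ ^ (2 * k) := hmom
  have hI2' : 0 ≤ ∫ x, |x - μ| ^ p ∂P :=
    integral_nonneg fun x => Real.rpow_nonneg (abs_nonneg _) _
  have hI3 : ∫ x, Aᶜ.indicator (fun _ => (1 : ℝ)) x ^ q ∂P = (P Aᶜ).toReal := by
    have : ∀ x, Aᶜ.indicator (fun _ => (1 : ℝ)) x ^ q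
        = Aᶜ.indicator (fun _ => (1 : ℝ)) x := by
      intro x
      by_cases hx : x ∈ Aᶜ <;> simp [hx, Real.zero_rpow hq0.ne']
    simp_rw [this]
    rw [integral_indicator hAc]
    simp [measureReal_def]
  -- the Hölder bound
  have hmain : ∫ x in Aᶜ, |x - μ| ∂P ≤ C ^ (1 / p) * σ * ε ^ (1 - 1 / p) := by
    rw [← hI1]
    refine holder.trans ?_
    rw [hI3]
    have hb1 : (∫ x, |x - μ| ^ p ∂P) ^ (1 / p) ≤ (C * σ ^ (2 * k)) ^ (1 / p) :=
      Real.rpow_le_rpow hI2' hI2 (by positivity)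
    have hb2 : (C * σ ^ (2 * k)) ^ (1 / p) = C ^ (1 / p) * σ := by
      rw [Real.mul_rpow hC (by positivity)]
      congr 1
      rw [show σ ^ (2 * k) = σ ^ p by rw [← Real.rpow_natCast σ (2 * k)]; push_cast; ring_nf; rw [hp_def, mul_comm],
        ← Real.rpow_mul hσ, mul_one_div, div_self hp0.ne', Real.rpow_one]
    have hb3 : (P Aᶜ).toReal ^ (1 / q) ≤ ε ^ (1 - 1 / p) := by
      rw [← hq_inv]
      exact Real.rpow_le_rpow hPAc0 hPAc (by positivity)
    calc (∫ x, |x - μ| ^ p ∂P) ^ (1 / p) * (P Aᶜ).toReal ^ (1 / q)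
        ≤ (C ^ (1 / p) * σ) * (ε ^ (1 - 1 / p)) := by
          apply mul_le_mul (hb1.trans_eq hb2) hb3 (Real.rpow_nonneg hPAc0 _) (by positivity)
      _ = C ^ (1 / p) * σ * ε ^ (1 - 1 / p) := by ring
  -- identity for the conditional mean shift
  have hsplit : (∫ x in A, x ∂P) / m - μ = -(∫ x in Aᶜ, (x - μ) ∂P) / m := by
    have hid : Integrable (fun x : ℝ => x) P := hint
    have hcompl : (∫ x in A, (x - μ) ∂P) + ∫ x in Aᶜ, (x - μ) ∂P = 0 := by
      rw [integral_add_compl hA hint']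
      have : ∫ x, (x - μ) ∂P = (∫ x, x ∂P) - μ := by
        rw [integral_sub hid (integrable_const μ)]; simp
      rw [this, hmean]; ring
    have hAint : ∫ x in A, (x - μ) ∂P = (∫ x in A, x ∂P) - μ * m := by
      rw [integral_sub (hid.integrableOn) ((integrableOn_const_iff).mpr (Or.inr (measure_lt_top P A)))]
      simp [hm_def, mul_comm, measureReal_def]
    field_simp
    linarith [hcompl, hAint]
  rw [hsplit, abs_div, abs_of_pos hm0, abs_neg]
  have habs : |∫ x in Aᶜ, (x - μ) ∂P| ≤ ∫ x in Aᶜ, |x - μ| ∂P := by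
    simpa [Real.norm_eq_abs] using
      norm_integral_le_integral_norm (μ := P.restrict Aᶜ) (f := fun x => x - μ)
  have hB : (0:ℝ) ≤ C ^ (1 / p) * σ * ε ^ (1 - 1 / p) := by positivity
  calc |∫ x in Aᶜ, (x - μ) ∂P| / m ≤ (C ^ (1 / p) * σ * ε ^ (1 - 1 / p)) / (1 / 2) := by
        apply div_le_div₀ (by positivity) (habs.trans hmain) (by norm_num) hm
    _ = 2 * C ^ ((1:ℝ) / (2 * (k:ℝ))) * σ * ε ^ (1 - 1 / (2 * (k:ℝ))) := by
        rw [hp_def]; ring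
end

section
/- Let P be a distribution on ℝ^p with mean μ and covariance Σ, with bounded 2k-th directional moments: for all unit vectors v, E[(v^T(x-μ))^{2k}] ≤ C_{2k} (v^T Σ v)^k. Then for any event A with P(A) ≥ 1-ε ≥ 1/2, the conditional mean satisfies ‖E[x | A] - μ‖₂ ≤ 2 C_{2k}^{1/(2k)} ‖Σ‖₂^{1/2} ε^{1 - 1/(2k)}. -/
open MeasureTheory

set_option maxHeartbeats 1000000 in
set_option synthInstance.maxHeartbeats 1000000 in
/-- Mean shift under conditioning, for a multivariate distribution with bounded
`2k`-th directional moments. -/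
theorem conditional_mean_shift_multivariate
    (p k : ℕ) (hk : 1 ≤ k)
    (P : Measure (EuclideanSpace ℝ (Fin p))) [IsProbabilityMeasure P]
    (μ : EuclideanSpace ℝ (Fin p)) (Cov : Matrix (Fin p) (Fin p) ℝ)
    (C ε : ℝ) (hC : 0 ≤ C)
    (hint : Integrable id P)
    (hmean : ∫ x, x ∂P = μ)
    (hmom_int : ∀ v : EuclideanSpace ℝ (Fin p), ‖v‖ = 1 →
      Integrable (fun x => (inner ℝ v (x - μ) : ℝ) ^ (2 * k)) P)
    (hmom : ∀ v : EuclideanSpace ℝ (Fin p), ‖v‖ = 1 →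
      (∫ x, (inner ℝ v (x - μ) : ℝ) ^ (2 * k) ∂P) ≤
        C * (∑ a, ∑ b, v a * Cov a b * v b) ^ k)
    (A : Set (EuclideanSpace ℝ (Fin p))) (hA : MeasurableSet A)
    (hε0 : 0 ≤ ε) (hε : ε ≤ 1 / 2)
    (hPA : 1 - ε ≤ (P A).toReal) :
    ‖(P A).toReal⁻¹ • (∫ x in A, x ∂P) - μ‖ ≤
      2 * C ^ ((1 : ℝ) / (2 * k)) *
        ‖Matrix.toEuclideanCLM (𝕜 := ℝ) Cov‖ ^ ((1 : ℝ) / 2) *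
        ε ^ (1 - 1 / (2 * (k : ℝ))) := by
  set M := Matrix.toEuclideanCLM (𝕜 := ℝ) Cov with hM
  have hk' : (1:ℝ) ≤ (k:ℝ) := by exact_mod_cast hk
  have hk0 : (k:ℝ) ≠ 0 := by linarith
  set nr : ℝ := 2 * (k:ℝ) with hnr
  have hnr2 : (2:ℝ) ≤ nr := by rw [hnr]; nlinarith
  have hnr1 : (1:ℝ) < nr := by linarith
  have hnr0 : (0:ℝ) < nr := by linarith
  have hRHS : 0 ≤ 2 * C ^ ((1 : ℝ) / nr) * ‖M‖ ^ ((1:ℝ)/2) * ε ^ (1 - 1/nr) := by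
    apply mul_nonneg
    apply mul_nonneg
    · exact mul_nonneg (by norm_num) (Real.rpow_nonneg hC _)
    · exact Real.rpow_nonneg (norm_nonneg _) _
    · exact Real.rpow_nonneg hε0 _
  have hPA1 : (P A).toReal ≤ 1 := by
    simpa using ENNReal.toReal_mono (measure_ne_top P Set.univ)
      (measure_mono (Set.subset_univ A))
  have hhalf : (1:ℝ)/2 ≤ (P A).toReal := by linarith
  have hPApos : (0:ℝ) < (P A).toReal := by linarith
  have hPAinv : (P A).toReal⁻¹ ≤ 2 := by
    rw [inv_le_comm₀ (by linarith) (by norm_num)]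
    linarith
  have haddc : (P A).toReal + (P Aᶜ).toReal = 1 := by
    rw [← ENNReal.toReal_add (measure_ne_top _ _) (measure_ne_top _ _),
      measure_add_measure_compl hA]
    simp
  have hcompl : (P Aᶜ).toReal ≤ ε := by linarith
  set w := (P A).toReal⁻¹ • (∫ x in A, x ∂P) - μ with hw
  rcases eq_or_ne w 0 with h0 | h0
  · rw [h0, norm_zero]; exact hRHS
  have hwpos : 0 < ‖w‖ := norm_pos_iff.mpr h0
  set v := ‖w‖⁻¹ • w with hv
  have hvnorm : ‖v‖ = 1 := by
    rw [hv, norm_smul, norm_inv, norm_norm, inv_mul_cancel₀ hwpos.ne']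
  set f : EuclideanSpace ℝ (Fin p) → ℝ := fun x => (inner ℝ v (x - μ) : ℝ) with hf
  have hid : Integrable (fun x => x) P := hint
  have hsub : Integrable (fun x => x - μ) P := hid.sub (integrable_const μ)
  have hf_int : Integrable f P := (innerSL ℝ v).integrable_comp hsub
  have hf_mean : ∫ x, f x ∂P = 0 := by
    have h1 : ∫ x, f x ∂P = (inner ℝ v (∫ x, (x - μ) ∂P) : ℝ) := integral_inner hsub v
    have h2 : ∫ x, (x - μ) ∂P = 0 := by
      rw [integral_sub hid (integrable_const μ), integral_const]
      simp only [Measure.real, measure_univ, ENNReal.toReal_one, one_smul]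
      rw [hmean, sub_self]
    rw [h1, h2, inner_zero_right]
  have hIA : ∫ x in A, f x ∂P =
      (inner ℝ v (∫ x in A, x ∂P) : ℝ) - (P A).toReal * (inner ℝ v μ : ℝ) := by
    have h1 : ∫ x in A, f x ∂P = (inner ℝ v (∫ x in A, (x - μ) ∂P) : ℝ) :=
      integral_inner hsub.restrict v
    have h2 : ∫ x in A, (x - μ) ∂P = (∫ x in A, x ∂P) - (P A).toReal • μ := by
      rw [integral_sub hid.restrict (integrable_const μ), integral_const, Measure.real,
        Measure.restrict_apply_univ]
    rw [h1, h2, inner_sub_right, real_inner_smul_right]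
  have hvw : (inner ℝ v w : ℝ) = (P A).toReal⁻¹ * ∫ x in A, f x ∂P := by
    rw [hw, inner_sub_right, real_inner_smul_right, hIA]
    field_simp
  have hnormw : ‖w‖ = (inner ℝ v w : ℝ) := by
    rw [hv, real_inner_smul_left, real_inner_self_eq_norm_sq]
    field_simp
  have hAc : ∫ x in A, f x ∂P = - ∫ x in Aᶜ, f x ∂P := by
    have h := integral_add_compl hA hf_int
    rw [hf_mean] at h
    linarith
  -- Hölder
  have hq : nr.HolderConjugate (Real.conjExponent nr) :=
    Real.HolderConjugate.conjExponent hnr1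
  set qr := Real.conjExponent nr with hqr
  have hfm : AEStronglyMeasurable f (P.restrict Aᶜ) := by
    apply Continuous.aestronglyMeasurable
    exact (innerSL ℝ v).continuous.comp (continuous_id.sub continuous_const)
  have hpow_int : Integrable (fun x => (f x) ^ (2*k)) (P.restrict Aᶜ) := (hmom_int v hvnorm).restrict
  have habs_eq : ∀ x, |f x| ^ nr = (f x) ^ (2*k) := by
    intro x
    rw [show nr = ((2*k : ℕ):ℝ) by push_cast [hnr]; ring,
      Real.rpow_natCast, Even.pow_abs (even_two_mul k)]
  have h1 : Integrable (fun x => |f x| ^ nr) (P.restrict Aᶜ) :=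
    hpow_int.congr (Filter.Eventually.of_forall fun x => (habs_eq x).symm)
  set q0 : ENNReal := ENNReal.ofReal nr with hq0
  have hq0ne : q0 ≠ 0 := by
    simp only [hq0, ne_eq, ENNReal.ofReal_eq_zero, not_le]
    linarith
  have hq0top : q0 ≠ ⊤ := ENNReal.ofReal_ne_top
  have hq0toReal : q0.toReal = nr := ENNReal.toReal_ofReal hnr0.le
  have hmem1 : MemLp (fun x => ‖f x‖ ^ q0.toReal) 1 (P.restrict Aᶜ) := by
    rw [hq0toReal]
    apply memLp_one_iff_integrable.2
    exact h1.congr (Filter.Eventually.of_forall fun x => by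
      simp only [Real.norm_eq_abs])
  have hmemf : MemLp f q0 (P.restrict Aᶜ) := by
    refine (memLp_norm_rpow_iff hfm hq0ne hq0top).1 ?_
    rwa [ENNReal.div_self hq0ne hq0top]
  have hmemabs : MemLp (fun x => |f x|) q0 (P.restrict Aᶜ) := by
    have := (memLp_norm_iff hfm).2 hmemf
    exact (memLp_congr_ae (Filter.Eventually.of_forall fun x =>
      (Real.norm_eq_abs (f x)))).1 this
  have hg : MemLp (fun _ => (1:ℝ)) (ENNReal.ofReal qr) (P.restrict Aᶜ) := memLp_const 1
  have hholder := integral_mul_le_Lp_mul_Lq_of_nonneg (μ := P.restrict Aᶜ) hq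
      (Filter.Eventually.of_forall fun x => abs_nonneg (f x))
      (Filter.Eventually.of_forall fun _ => zero_le_one)
      hmemabs hg
  simp only [mul_one, Real.one_rpow, integral_const, Measure.real, Measure.restrict_apply_univ,
    smul_eq_mul] at hholder
  -- bound the 2k-th moment factor
  set s : ℝ := ∑ a, ∑ b, v a * Cov a b * v b with hs
  have hMva : ∀ a, (M v) a = ∑ b, Cov a b * v b := by
    intro a
    have h := congrFun (Matrix.ofLp_toEuclideanCLM (𝕜:=ℝ) Cov v) a
    rw [h]; simp [Matrix.mulVec, dotProduct]
  have hsM : s = (inner ℝ v (M v) : ℝ) := by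
    rw [hs, PiLp.inner_apply]
    simp only [RCLike.inner_apply, conj_trivial]
    refine Finset.sum_congr rfl fun a _ => ?_
    rw [hMva a, Finset.sum_mul]
    refine Finset.sum_congr rfl fun b _ => by ring
  have habsS : |s| ≤ ‖M‖ := by
    rw [hsM]
    calc |(inner ℝ v (M v) : ℝ)| ≤ ‖v‖ * ‖M v‖ := abs_real_inner_le_norm v (M v)
      _ ≤ ‖v‖ * (‖M‖ * ‖v‖) := by
          exact mul_le_mul_of_nonneg_left (M.le_opNorm v) (norm_nonneg v)
      _ = ‖M‖ := by rw [hvnorm]; ring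
  have hsk : s ^ k ≤ ‖M‖ ^ k := by
    calc s ^ k ≤ |s ^ k| := le_abs_self _
      _ = |s| ^ k := abs_pow s k
      _ ≤ ‖M‖ ^ k := pow_le_pow_left₀ (abs_nonneg s) habsS k
  set I : ℝ := ∫ x, |f x| ^ nr ∂(P.restrict Aᶜ) with hI
  have hI0 : 0 ≤ I := integral_nonneg fun x => Real.rpow_nonneg (abs_nonneg _) _
  have hIle : I ≤ C * ‖M‖ ^ k := by
    have hIeq : I = ∫ x in Aᶜ, (f x) ^ (2*k) ∂P := by
      rw [hI]
      exact integral_congr_ae (Filter.Eventually.of_forall fun x => habs_eq x)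
    rw [hIeq]
    calc ∫ x in Aᶜ, (f x) ^ (2*k) ∂P ≤ ∫ x, (f x) ^ (2*k) ∂P :=
          setIntegral_le_integral (hmom_int v hvnorm)
            (Filter.Eventually.of_forall fun x => (even_two_mul k).pow_nonneg _)
      _ ≤ C * s ^ k := hmom v hvnorm
      _ ≤ C * ‖M‖ ^ k := mul_le_mul_of_nonneg_left hsk hC
  have h2 : I ^ ((1:ℝ)/nr) ≤ C ^ ((1:ℝ)/nr) * ‖M‖ ^ ((1:ℝ)/2) := by
    calc I ^ ((1:ℝ)/nr) ≤ (C * ‖M‖ ^ k) ^ ((1:ℝ)/nr) :=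
          Real.rpow_le_rpow hI0 hIle (by positivity)
      _ = C ^ ((1:ℝ)/nr) * (‖M‖ ^ k) ^ ((1:ℝ)/nr) :=
          Real.mul_rpow hC (by positivity)
      _ = C ^ ((1:ℝ)/nr) * ‖M‖ ^ ((1:ℝ)/2) := by
          have hex : (k:ℝ) * ((1:ℝ)/nr) = 1/2 := by
            rw [hnr]; field_simp
          rw [← Real.rpow_natCast ‖M‖ k, ← Real.rpow_mul (norm_nonneg _), hex]
  have h1q : (1:ℝ)/qr = 1 - 1/nr := by
    have h := hq.inv_add_inv_eq_one
    rw [one_div, one_div]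
    linarith
  have hexp0 : (0:ℝ) ≤ 1 - 1/nr := by
    have : 1/nr ≤ 1 := by
      rw [div_le_one hnr0]; linarith
    linarith
  have h3 : (P Aᶜ).toReal ^ ((1:ℝ)/qr) ≤ ε ^ (1 - 1/nr) := by
    rw [h1q]
    exact Real.rpow_le_rpow ENNReal.toReal_nonneg hcompl hexp0
  have hACbound : ∫ x in Aᶜ, |f x| ∂P ≤
      C ^ ((1:ℝ)/nr) * ‖M‖ ^ ((1:ℝ)/2) * ε ^ (1 - 1/nr) := by
    calc ∫ x in Aᶜ, |f x| ∂P ≤ I ^ ((1:ℝ)/nr) * (P Aᶜ).toReal ^ ((1:ℝ)/qr) := hholder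
      _ ≤ (C ^ ((1:ℝ)/nr) * ‖M‖ ^ ((1:ℝ)/2)) * (ε ^ (1 - 1/nr)) := by
          apply mul_le_mul h2 h3 (Real.rpow_nonneg ENNReal.toReal_nonneg _)
          exact mul_nonneg (Real.rpow_nonneg hC _) (Real.rpow_nonneg (norm_nonneg _) _)
  have habs_int : |∫ x in Aᶜ, f x ∂P| ≤ ∫ x in Aᶜ, |f x| ∂P := by
    simpa [Real.norm_eq_abs] using
      norm_integral_le_integral_norm (μ := P.restrict Aᶜ) f
  have hint_abs_nonneg : 0 ≤ ∫ x in Aᶜ, |f x| ∂P :=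
    integral_nonneg fun x => abs_nonneg _
  calc ‖w‖ = (P A).toReal⁻¹ * ∫ x in A, f x ∂P := by rw [hnormw, hvw]
    _ ≤ 2 * ∫ x in Aᶜ, |f x| ∂P := by
        have h4 : ∫ x in A, f x ∂P ≤ |∫ x in Aᶜ, f x ∂P| := by
          rw [hAc]; exact neg_le_abs _
        have h5 : (P A).toReal⁻¹ * ∫ x in A, f x ∂P ≤
            (P A).toReal⁻¹ * ∫ x in Aᶜ, |f x| ∂P :=
          mul_le_mul_of_nonneg_left (h4.trans habs_int) (inv_nonneg.2 hPApos.le)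
        have h6 : (P A).toReal⁻¹ * ∫ x in Aᶜ, |f x| ∂P ≤ 2 * ∫ x in Aᶜ, |f x| ∂P :=
          mul_le_mul_of_nonneg_right hPAinv hint_abs_nonneg
        linarith
    _ ≤ 2 * (C ^ ((1:ℝ)/nr) * ‖M‖ ^ ((1:ℝ)/2) * ε ^ (1 - 1/nr)) :=
        mul_le_mul_of_nonneg_left hACbound (by norm_num)
    _ = 2 * C ^ ((1:ℝ)/nr) * ‖M‖ ^ ((1:ℝ)/2) * ε ^ (1 - 1/nr) := by ring
end

section
/- Let x be a random vector in ℝ^p with mean μ and covariance Σ, satisfying the bounded fourth moment condition: for all unit vectors v, E[(v^T(x-μ))⁴] ≤ C (v^T Σ v)². Then E[‖x-μ‖₂⁴] ≤ C (tr Σ)². -/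
open MeasureTheory

/-- Bounded directional fourth moments imply a bounded fourth moment of the norm:
`E‖x-μ‖₂⁴ ≤ C (tr Σ)²`. -/
theorem fourth_moment_norm_bound
    (p : ℕ)
    (P : Measure (EuclideanSpace ℝ (Fin p))) [IsProbabilityMeasure P]
    (μ : EuclideanSpace ℝ (Fin p)) (Cov : Matrix (Fin p) (Fin p) ℝ)
    (C : ℝ) (hC : 0 < C)
    (hint : Integrable id P)
    (hmean : ∫ x, x ∂P = μ)
    (hCov : ∀ a b, Cov a b = ∫ x, (x a - μ a) * (x b - μ b) ∂P)
    (hmom_int : Integrable (fun x => ‖x - μ‖ ^ 4) P)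
    (hdir_int : ∀ v : EuclideanSpace ℝ (Fin p), ‖v‖ = 1 →
      Integrable (fun x => (inner ℝ v (x - μ) : ℝ) ^ 4) P)
    (hmom : ∀ v : EuclideanSpace ℝ (Fin p), ‖v‖ = 1 →
      (∫ x, (inner ℝ v (x - μ) : ℝ) ^ 4 ∂P) ≤
        C * (∑ a, ∑ b, v a * Cov a b * v b) ^ 2) :
    (∫ x, ‖x - μ‖ ^ 4 ∂P) ≤ C * Cov.trace ^ 2 := by
  classical
  set f : Fin p → EuclideanSpace ℝ (Fin p) → ℝ := fun i x => x i - μ i with hf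
  -- basic facts about coordinates
  have hcont : ∀ i, Continuous (f i) := by
    intro i
    exact ((EuclideanSpace.proj (𝕜 := ℝ) i).continuous).sub continuous_const
  have habs : ∀ i (x : EuclideanSpace ℝ (Fin p)), |f i x| ≤ ‖x - μ‖ := by
    intro i x
    have h1 : f i x = inner ℝ (EuclideanSpace.single i (1 : ℝ)) (x - μ) := by
      rw [EuclideanSpace.inner_single_left]
      simp [f]
    rw [h1]
    calc |(inner ℝ (EuclideanSpace.single i (1 : ℝ)) (x - μ) : ℝ)|
        ≤ ‖EuclideanSpace.single i (1 : ℝ)‖ * ‖x - μ‖ := abs_real_inner_le_norm _ _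
      _ = ‖x - μ‖ := by rw [EuclideanSpace.norm_single]; simp
  -- the single vectors are unit vectors
  have hunit : ∀ i : Fin p, ‖(EuclideanSpace.single i (1 : ℝ) : EuclideanSpace ℝ (Fin p))‖ = 1 := by
    intro i; rw [EuclideanSpace.norm_single]; simp
  have hinner : ∀ i (x : EuclideanSpace ℝ (Fin p)),
      (inner ℝ (EuclideanSpace.single i (1 : ℝ)) (x - μ) : ℝ) = f i x := by
    intro i x; rw [EuclideanSpace.inner_single_left]; simp [f]
  -- fourth moments of coordinates
  have hfi4_int : ∀ i, Integrable (fun x => f i x ^ 4) P := by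
    intro i
    have := hdir_int _ (hunit i)
    refine this.congr (Filter.Eventually.of_forall fun x => ?_)
    simp only [hinner]
  have hfi4_bound : ∀ i, (∫ x, f i x ^ 4 ∂P) ≤ C * Cov i i ^ 2 := by
    intro i
    have h := hmom _ (hunit i)
    have he : (∫ x, (inner ℝ (EuclideanSpace.single i (1:ℝ)) (x - μ) : ℝ) ^ 4 ∂P)
        = ∫ x, f i x ^ 4 ∂P := by
      refine integral_congr_ae (Filter.Eventually.of_forall fun x => ?_)
      simp only [hinner]
    have hs : (∑ a, ∑ b, (EuclideanSpace.single i (1:ℝ)) a * Cov a b *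
        (EuclideanSpace.single i (1:ℝ)) b) = Cov i i := by
      simp [EuclideanSpace.single_apply, Finset.sum_ite_eq', Finset.mul_sum]
    rw [he, hs] at h
    exact h
  -- diagonal of Cov is nonnegative
  have hdiag : ∀ i, 0 ≤ Cov i i := by
    intro i
    rw [hCov i i]
    exact integral_nonneg fun x => mul_self_nonneg _
  -- products of squared coordinates are integrable
  have hg_int : ∀ i j, Integrable (fun x => f i x ^ 2 * f j x ^ 2) P := by
    intro i j
    refine hmom_int.mono ?_ (Filter.Eventually.of_forall fun x => ?_)
    · exact (((hcont i).pow 2).mul ((hcont j).pow 2)).aestronglyMeasurable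
    · have hi := habs i x; have hj := habs j x
      have hn : (0:ℝ) ≤ ‖x - μ‖ := norm_nonneg _
      rw [Real.norm_eq_abs, Real.norm_eq_abs, abs_mul, abs_pow, abs_pow, sq_abs, sq_abs,
        ← sq_abs (f i x), ← sq_abs (f j x), abs_of_nonneg (pow_nonneg hn 4)]
      have h2i : |f i x| ^ 2 ≤ ‖x - μ‖ ^ 2 := pow_le_pow_left₀ (abs_nonneg _) hi 2
      have h2j : |f j x| ^ 2 ≤ ‖x - μ‖ ^ 2 := pow_le_pow_left₀ (abs_nonneg _) hj 2
      calc |f i x| ^ 2 * |f j x| ^ 2 ≤ ‖x - μ‖ ^ 2 * ‖x - μ‖ ^ 2 :=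
            mul_le_mul h2i h2j (pow_nonneg (abs_nonneg _) 2) (pow_nonneg hn 2)
        _ = ‖x - μ‖ ^ 4 := by ring
  -- Cauchy–Schwarz on each cross term
  have hcs : ∀ i j, (∫ x, f i x ^ 2 * f j x ^ 2 ∂P) ≤ C * (Cov i i * Cov j j) := by
    intro i j
    have hmem : ∀ k, MemLp (fun x => f k x ^ 2) 2 P := by
      intro k
      refine (memLp_two_iff_integrable_sq (f := fun x => f k x ^ 2) ((hcont k).pow 2).aestronglyMeasurable).2 ?_
      refine (hfi4_int k).congr (Filter.Eventually.of_forall fun x => ?_)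
      ring
    have hconj : (2:ℝ).HolderConjugate 2 :=
      (Real.holderConjugate_iff_eq_conjExponent (by norm_num)).2 (by norm_num)
    have h := integral_mul_le_Lp_mul_Lq_of_nonneg hconj
      (Filter.Eventually.of_forall fun x => sq_nonneg (f i x))
      (Filter.Eventually.of_forall fun x => sq_nonneg (f j x))
      (by simpa using hmem i) (by simpa using hmem j)
    refine h.trans ?_
    have hrw : ∀ k, (∫ x, (f k x ^ 2) ^ (2:ℝ) ∂P) = ∫ x, f k x ^ 4 ∂P := by
      intro k
      refine integral_congr_ae (Filter.Eventually.of_forall fun x => ?_)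
      show (f k x ^ 2) ^ (2:ℝ) = f k x ^ 4
      rw [show (2:ℝ) = ((2:ℕ):ℝ) by norm_num, Real.rpow_natCast]
      ring
    rw [hrw i, hrw j]
    have hAnn : ∀ k, 0 ≤ ∫ x, f k x ^ 4 ∂P := fun k =>
      integral_nonneg fun x => by positivity
    have hle : ∀ k, (∫ x, f k x ^ 4 ∂P) ^ (1/(2:ℝ)) ≤ Real.sqrt C * Cov k k := by
      intro k
      have h1 : (∫ x, f k x ^ 4 ∂P) ^ (1/(2:ℝ)) ≤ (C * Cov k k ^ 2) ^ (1/(2:ℝ)) :=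
        Real.rpow_le_rpow (hAnn k) (hfi4_bound k) (by norm_num)
      refine h1.trans_eq ?_
      rw [← Real.sqrt_eq_rpow, Real.sqrt_mul hC.le, Real.sqrt_sq (hdiag k)]
    have h2 : (∫ x, f i x ^ 4 ∂P) ^ (1/(2:ℝ)) * (∫ x, f j x ^ 4 ∂P) ^ (1/(2:ℝ))
        ≤ (Real.sqrt C * Cov i i) * (Real.sqrt C * Cov j j) := by
      exact mul_le_mul (hle i) (hle j) (Real.rpow_nonneg (hAnn j) _)
        (mul_nonneg (Real.sqrt_nonneg C) (hdiag i))
    refine h2.trans_eq ?_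
    have hss : Real.sqrt C * Real.sqrt C = C := Real.mul_self_sqrt hC.le
    linear_combination Cov i i * Cov j j * hss
  -- expand the norm to the fourth power
  have hnorm4 : ∀ x : EuclideanSpace ℝ (Fin p),
      ‖x - μ‖ ^ 4 = ∑ i, ∑ j, f i x ^ 2 * f j x ^ 2 := by
    intro x
    have h1 : ‖x - μ‖ ^ 2 = ∑ i, f i x ^ 2 := by
      rw [EuclideanSpace.norm_eq, Real.sq_sqrt (by positivity)]
      refine Finset.sum_congr rfl fun i _ => ?_
      simp [f]
    have : ‖x - μ‖ ^ 4 = (‖x - μ‖ ^ 2) ^ 2 := by ring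
    rw [this, h1, sq, Finset.sum_mul_sum]
  calc (∫ x, ‖x - μ‖ ^ 4 ∂P)
      = ∫ x, ∑ i, ∑ j, f i x ^ 2 * f j x ^ 2 ∂P := by
        exact integral_congr_ae (Filter.Eventually.of_forall fun x => hnorm4 x)
    _ = ∑ i, ∑ j, ∫ x, f i x ^ 2 * f j x ^ 2 ∂P := by
        rw [integral_finset_sum _ fun i _ => integrable_finset_sum _ fun j _ => hg_int i j]
        exact Finset.sum_congr rfl fun i _ => integral_finset_sum _ fun j _ => hg_int i j
    _ ≤ ∑ i, ∑ j, C * (Cov i i * Cov j j) :=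
        Finset.sum_le_sum fun i _ => Finset.sum_le_sum fun j _ => hcs i j
    _ = C * Cov.trace ^ 2 := by
        rw [Matrix.trace, sq, Finset.sum_mul_sum, Finset.mul_sum]
        exact Finset.sum_congr rfl fun i _ => by
          rw [Finset.mul_sum]
          exact Finset.sum_congr rfl fun j _ => by simp [Matrix.diag]
end

section
/- Let P₁ and P₂ be two discrete probability distributions supported on a finite collection of points in ℝ^p, with means μ₁, μ₂ and covariance matrices Σ₁, Σ₂. If the total variation distance satisfies TV(P₁,P₂) < 1, then ‖μ₁ - μ₂‖₂ ≤ (√TV(P₁,P₂)/(1 - √TV(P₁,P₂))) (‖Σ₁‖₂^{1/2} + ‖Σ₂‖₂^{1/2}). -/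
open MeasureTheory

section Helpers

variable {α : Type*} [MeasurableSpace α] [MeasurableSingletonClass α]

lemma meas_finset_toReal (P : Measure α) [IsFiniteMeasure P] (t : Finset α) :
    (P (t : Set α)).toReal = ∑ x ∈ t, (P {x}).toReal := by
  have h : P (t : Set α) = ∑ x ∈ t, P {x} := by
    have := measure_biUnion_finset (μ := P) (s := t) (f := fun x => ({x} : Set α))
      (fun x _ y _ hxy => by simpa using hxy) (fun x _ => measurableSet_singleton x)
    rw [← this]
    congr 1
    exact (Set.biUnion_of_singleton (t : Set α)).symm
  rw [h, ENNReal.toReal_sum (fun x _ => measure_ne_top P _)]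

lemma integral_eq_sum_of_null_compl {F : Type*} [NormedAddCommGroup F] [NormedSpace ℝ F]
    [CompleteSpace F]
    (P : Measure α) [IsFiniteMeasure P] (s : Finset α)
    (hs : P ((s : Set α)ᶜ) = 0) (f : α → F) :
    ∫ x, f x ∂P = ∑ x ∈ s, (P {x}).toReal • f x := by
  have hmem : ∀ᵐ x ∂P, x ∈ (s : Set α) := by
    rw [MeasureTheory.ae_iff]
    exact hs
  rw [← Measure.restrict_eq_self_of_ae_mem hmem,
    integral_finset s IntegrableOn.finset]
  refine Finset.sum_congr rfl fun x hx => ?_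
  rw [measureReal_def, Measure.restrict_eq_self P (by simpa using hx : ({x} : Set α) ⊆ (s : Set α))]

/-- Cauchy–Schwarz for weighted sums. -/
lemma cs_aux {ι : Type*} (s : Finset ι) (r : ι → ℝ) (hr : ∀ x ∈ s, 0 ≤ r x) (c : ι → ℝ) :
    |∑ x ∈ s, r x * c x| ≤
      Real.sqrt (∑ x ∈ s, r x) * Real.sqrt (∑ x ∈ s, r x * (c x) ^ 2) := by
  have h := Finset.sum_mul_sq_le_sq_mul_sq s (fun x => Real.sqrt (r x))
    (fun x => Real.sqrt (r x) * c x)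
  have e1 : ∑ x ∈ s, Real.sqrt (r x) * (Real.sqrt (r x) * c x) = ∑ x ∈ s, r x * c x :=
    Finset.sum_congr rfl fun x hx => by
      rw [← mul_assoc, Real.mul_self_sqrt (hr x hx)]
  have e2 : ∑ x ∈ s, (Real.sqrt (r x)) ^ 2 = ∑ x ∈ s, r x :=
    Finset.sum_congr rfl fun x hx => Real.sq_sqrt (hr x hx)
  have e3 : ∑ x ∈ s, (Real.sqrt (r x) * c x) ^ 2 = ∑ x ∈ s, r x * (c x) ^ 2 :=
    Finset.sum_congr rfl fun x hx => by rw [mul_pow, Real.sq_sqrt (hr x hx)]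
  rw [e1, e2, e3] at h
  have h0 : 0 ≤ ∑ x ∈ s, r x := Finset.sum_nonneg hr
  calc |∑ x ∈ s, r x * c x| = Real.sqrt ((∑ x ∈ s, r x * c x) ^ 2) :=
        (Real.sqrt_sq_eq_abs _).symm
    _ ≤ Real.sqrt ((∑ x ∈ s, r x) * ∑ x ∈ s, r x * (c x) ^ 2) := Real.sqrt_le_sqrt h
    _ = _ := Real.sqrt_mul h0 _

lemma inner_eucl {p : ℕ} (u w : EuclideanSpace ℝ (Fin p)) :
    (inner ℝ u w : ℝ) = ∑ i, u i * w i := by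
  simp [PiLp.inner_apply, RCLike.inner_apply, mul_comm]

/-- The weighted quadratic form is bounded by the operator norm of the covariance matrix. -/
lemma quad_form_bound {p : ℕ} (s : Finset (EuclideanSpace ℝ (Fin p)))
    (q : EuclideanSpace ℝ (Fin p) → ℝ)
    (μ : EuclideanSpace ℝ (Fin p)) (M : Matrix (Fin p) (Fin p) ℝ)
    (hM : ∀ a b, M a b = ∑ x ∈ s, q x * ((x a - μ a) * (x b - μ b)))
    (v : EuclideanSpace ℝ (Fin p)) (hv : ‖v‖ = 1) :
    ∑ x ∈ s, q x * (inner ℝ v (x - μ) : ℝ) ^ 2 ≤ ‖Matrix.toEuclideanCLM (𝕜 := ℝ) M‖ := by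
  set A := Matrix.toEuclideanCLM (𝕜 := ℝ) M with hA
  have happ : ∀ a, (A v) a = ∑ b, M a b * v b := by
    intro a
    rw [hA, Matrix.ofLp_toEuclideanCLM]
    simp [Matrix.mulVec, dotProduct]
  have key : ∑ x ∈ s, q x * (inner ℝ v (x - μ) : ℝ) ^ 2 = (inner ℝ (A v) v : ℝ) := by
    calc ∑ x ∈ s, q x * (inner ℝ v (x - μ) : ℝ) ^ 2
        = ∑ x ∈ s, ∑ a, ∑ b, (v a * v b) * (q x * ((x a - μ a) * (x b - μ b))) := by
          refine Finset.sum_congr rfl fun x _ => ?_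
          rw [inner_eucl, sq, Finset.sum_mul_sum, Finset.mul_sum]
          refine Finset.sum_congr rfl fun a _ => ?_
          rw [Finset.mul_sum]
          refine Finset.sum_congr rfl fun b _ => ?_
          simp only [PiLp.sub_apply]
          ring
      _ = ∑ a, ∑ b, (v a * v b) * M a b := by
          rw [Finset.sum_comm]
          refine Finset.sum_congr rfl fun a _ => ?_
          rw [Finset.sum_comm]
          refine Finset.sum_congr rfl fun b _ => ?_
          rw [hM, Finset.mul_sum]
      _ = ∑ a, (A v) a * v a := by
          refine Finset.sum_congr rfl fun a _ => ?_
          rw [happ, Finset.sum_mul]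
          exact Finset.sum_congr rfl fun b _ => by ring
      _ = (inner ℝ (A v) v : ℝ) := (inner_eucl _ _).symm
  rw [key]
  have h1 : (inner ℝ (A v) v : ℝ) ≤ ‖A v‖ * ‖v‖ :=
    le_trans (le_abs_self _) (abs_real_inner_le_norm _ _)
  have h2 : ‖A v‖ ≤ ‖A‖ * ‖v‖ := A.le_opNorm v
  rw [hv, mul_one] at h1 h2
  linarith

end Helpers

/-- Total variation distance between two probability measures, as the supremum over
sets of the discrepancy of the probabilities. -/
noncomputable def tvDist {E : Type*} [MeasurableSpace E] (P Q : Measure E) : ℝ :=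
  ⨆ s : Set E, |(P s).toReal - (Q s).toReal|

/-- Mean control via total variation: if two finitely supported distributions are close
in TV, their means are close in `ℓ₂`, at a scale given by the spectral norms of their
covariances. -/
theorem mean_control_tv
    (p : ℕ)
    (P₁ P₂ : Measure (EuclideanSpace ℝ (Fin p)))
    [IsProbabilityMeasure P₁] [IsProbabilityMeasure P₂]
    (hfin : ∃ s : Finset (EuclideanSpace ℝ (Fin p)),
      P₁ ((s : Set (EuclideanSpace ℝ (Fin p)))ᶜ) = 0 ∧
      P₂ ((s : Set (EuclideanSpace ℝ (Fin p)))ᶜ) = 0)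
    (μ₁ μ₂ : EuclideanSpace ℝ (Fin p))
    (Cov₁ Cov₂ : Matrix (Fin p) (Fin p) ℝ)
    (hmean₁ : ∫ x, x ∂P₁ = μ₁) (hmean₂ : ∫ x, x ∂P₂ = μ₂)
    (hCov₁ : ∀ a b, Cov₁ a b = ∫ x, (x a - μ₁ a) * (x b - μ₁ b) ∂P₁)
    (hCov₂ : ∀ a b, Cov₂ a b = ∫ x, (x a - μ₂ a) * (x b - μ₂ b) ∂P₂)
    (htv : tvDist P₁ P₂ < 1) :
    ‖μ₁ - μ₂‖ ≤
      (Real.sqrt (tvDist P₁ P₂) / (1 - Real.sqrt (tvDist P₁ P₂))) *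
        (Real.sqrt ‖Matrix.toEuclideanCLM (𝕜 := ℝ) Cov₁‖ +
         Real.sqrt ‖Matrix.toEuclideanCLM (𝕜 := ℝ) Cov₂‖) := by
  classical
  obtain ⟨s, h1, h2⟩ := hfin
  set δ := tvDist P₁ P₂ with hδdef
  -- basic facts about δ
  have hbdd : BddAbove (Set.range fun t : Set (EuclideanSpace ℝ (Fin p)) =>
      |(P₁ t).toReal - (P₂ t).toReal|) := by
    refine ⟨1, ?_⟩
    rintro y ⟨t, rfl⟩
    have ha : (P₁ t).toReal ≤ 1 := by
      have h := ENNReal.toReal_mono (by simp) (measure_mono (Set.subset_univ t) : P₁ t ≤ P₁ Set.univ)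
      simpa using h
    have hb : (P₂ t).toReal ≤ 1 := by
      have h := ENNReal.toReal_mono (by simp) (measure_mono (Set.subset_univ t) : P₂ t ≤ P₂ Set.univ)
      simpa using h
    have ha0 : 0 ≤ (P₁ t).toReal := ENNReal.toReal_nonneg
    have hb0 : 0 ≤ (P₂ t).toReal := ENNReal.toReal_nonneg
    rw [abs_sub_le_iff]
    constructor <;> linarith
  have hδle : ∀ t : Set (EuclideanSpace ℝ (Fin p)),
      (P₁ t).toReal - (P₂ t).toReal ≤ δ := by
    intro t
    refine le_trans (le_abs_self _) ?_
    rw [hδdef, tvDist]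
    exact le_ciSup hbdd t
  have hδ0 : 0 ≤ δ := by
    have h := hδle ∅
    simpa using h
  have hsδ1 : Real.sqrt δ < 1 := by
    rw [← Real.sqrt_one]
    exact Real.sqrt_lt_sqrt hδ0 htv
  have hδleδs : δ ≤ Real.sqrt δ := by
    nlinarith [Real.sq_sqrt hδ0, Real.sqrt_nonneg δ]
  -- weights
  set q₁ : EuclideanSpace ℝ (Fin p) → ℝ := fun x => (P₁ {x}).toReal with hq₁def
  set q₂ : EuclideanSpace ℝ (Fin p) → ℝ := fun x => (P₂ {x}).toReal with hq₂def
  have hq₁0 : ∀ x, 0 ≤ q₁ x := fun x => ENNReal.toReal_nonneg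
  have hq₂0 : ∀ x, 0 ≤ q₂ x := fun x => ENNReal.toReal_nonneg
  have hsum₁ : ∑ x ∈ s, q₁ x = 1 := by
    have hs1 : P₁ (s : Set (EuclideanSpace ℝ (Fin p))) = 1 := by
      have hc := measure_add_measure_compl (μ := P₁) (Finset.measurableSet s)
      rw [h1, add_zero, measure_univ] at hc
      exact hc
    have h := meas_finset_toReal P₁ s
    rw [hs1] at h
    simpa [hq₁def] using h.symm
  have hsum₂ : ∑ x ∈ s, q₂ x = 1 := by
    have hs1 : P₂ (s : Set (EuclideanSpace ℝ (Fin p))) = 1 := by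
      have hc := measure_add_measure_compl (μ := P₂) (Finset.measurableSet s)
      rw [h2, add_zero, measure_univ] at hc
      exact hc
    have h := meas_finset_toReal P₂ s
    rw [hs1] at h
    simpa [hq₂def] using h.symm
  have hμ₁ : ∑ x ∈ s, q₁ x • x = μ₁ := by
    rw [hq₁def]
    rw [← integral_eq_sum_of_null_compl P₁ s h1]
    exact hmean₁
  have hμ₂ : ∑ x ∈ s, q₂ x • x = μ₂ := by
    rw [hq₂def]
    rw [← integral_eq_sum_of_null_compl P₂ s h2]
    exact hmean₂
  have hCov₁s : ∀ a b, Cov₁ a b = ∑ x ∈ s, q₁ x * ((x a - μ₁ a) * (x b - μ₁ b)) := by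
    intro a b
    rw [hCov₁ a b, integral_eq_sum_of_null_compl P₁ s h1]
    simp [hq₁def, smul_eq_mul]
  have hCov₂s : ∀ a b, Cov₂ a b = ∑ x ∈ s, q₂ x * ((x a - μ₂ a) * (x b - μ₂ b)) := by
    intro a b
    rw [hCov₂ a b, integral_eq_sum_of_null_compl P₂ s h2]
    simp [hq₂def, smul_eq_mul]
  -- the residual weights
  set r₁ : EuclideanSpace ℝ (Fin p) → ℝ := fun x => q₁ x - min (q₁ x) (q₂ x) with hr₁def
  set r₂ : EuclideanSpace ℝ (Fin p) → ℝ := fun x => q₂ x - min (q₁ x) (q₂ x) with hr₂def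
  set ρ := ∑ x ∈ s, r₁ x with hρdef
  have hr₁0 : ∀ x, 0 ≤ r₁ x := fun x => sub_nonneg.2 (min_le_left _ _)
  have hr₂0 : ∀ x, 0 ≤ r₂ x := fun x => sub_nonneg.2 (min_le_right _ _)
  have hr₁le : ∀ x, r₁ x ≤ q₁ x := fun x =>
    sub_le_self _ (le_min (hq₁0 x) (hq₂0 x))
  have hr₂le : ∀ x, r₂ x ≤ q₂ x := fun x =>
    sub_le_self _ (le_min (hq₁0 x) (hq₂0 x))
  have hρ0 : 0 ≤ ρ := Finset.sum_nonneg fun x _ => hr₁0 x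
  have hρ2 : ∑ x ∈ s, r₂ x = ρ := by
    rw [hρdef, hr₁def, hr₂def, Finset.sum_sub_distrib, Finset.sum_sub_distrib, hsum₁, hsum₂]
  -- ρ ≤ δ
  have hρδ : ρ ≤ δ := by
    set A := s.filter (fun x => q₂ x < q₁ x) with hAdef
    have hsub : ρ = ∑ x ∈ A, (q₁ x - q₂ x) := by
      have h := Finset.sum_subset (Finset.filter_subset (fun x => q₂ x < q₁ x) s)
        (f := r₁) ?_
      · rw [hρdef, ← h]
        refine Finset.sum_congr rfl fun x hx => ?_
        have hlt : q₂ x < q₁ x := (Finset.mem_filter.1 hx).2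
        rw [hr₁def]
        simp [min_eq_right hlt.le]
      · intro x hx hnx
        have hle : q₁ x ≤ q₂ x := by
          by_contra hc
          exact hnx (Finset.mem_filter.2 ⟨hx, not_le.1 hc⟩)
        rw [hr₁def]
        simp [min_eq_left hle]
    have hPA : (P₁ (A : Set (EuclideanSpace ℝ (Fin p)))).toReal
        - (P₂ (A : Set (EuclideanSpace ℝ (Fin p)))).toReal = ∑ x ∈ A, (q₁ x - q₂ x) := by
      rw [meas_finset_toReal, meas_finset_toReal, ← Finset.sum_sub_distrib]
    rw [hsub, ← hPA]
    exact hδle _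
  -- handle the trivial case
  by_cases hμeq : μ₁ = μ₂
  · rw [hμeq, sub_self, norm_zero]
    apply mul_nonneg
    · exact div_nonneg (Real.sqrt_nonneg _) (by linarith)
    · positivity
  -- main case
  have hDne : μ₁ - μ₂ ≠ 0 := sub_ne_zero.2 hμeq
  set v : EuclideanSpace ℝ (Fin p) := ‖μ₁ - μ₂‖⁻¹ • (μ₁ - μ₂) with hvdef
  have hv1 : ‖v‖ = 1 := by
    rw [hvdef]
    exact norm_smul_inv_norm (𝕜 := ℝ) hDne
  have hvD : (inner ℝ v (μ₁ - μ₂) : ℝ) = ‖μ₁ - μ₂‖ := by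
    rw [hvdef, real_inner_smul_left, real_inner_self_eq_norm_mul_norm]
    field_simp
  set T₁ := ∑ x ∈ s, r₁ x * (inner ℝ v (x - μ₁) : ℝ) with hT₁def
  set T₂ := ∑ x ∈ s, r₂ x * (inner ℝ v (x - μ₂) : ℝ) with hT₂def
  -- split lemma
  have hsplit : ∀ (μ : EuclideanSpace ℝ (Fin p)) (r : EuclideanSpace ℝ (Fin p) → ℝ),
      ∑ x ∈ s, r x * (inner ℝ v (x - μ) : ℝ)
        = (∑ x ∈ s, r x * (inner ℝ v x : ℝ)) - (∑ x ∈ s, r x) * (inner ℝ v μ : ℝ) := by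
    intro μ r
    rw [Finset.sum_mul, ← Finset.sum_sub_distrib]
    refine Finset.sum_congr rfl fun x _ => ?_
    rw [inner_sub_right]
    ring
  have hDsum : μ₁ - μ₂ = (∑ x ∈ s, r₁ x • x) - (∑ x ∈ s, r₂ x • x) := by
    rw [← hμ₁, ← hμ₂, ← Finset.sum_sub_distrib, ← Finset.sum_sub_distrib]
    refine Finset.sum_congr rfl fun x _ => ?_
    rw [← sub_smul, ← sub_smul, hr₁def, hr₂def]
    congr 1
    simp
  have hXdiff : (∑ x ∈ s, r₁ x * (inner ℝ v x : ℝ)) - (∑ x ∈ s, r₂ x * (inner ℝ v x : ℝ))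
      = ‖μ₁ - μ₂‖ := by
    rw [← hvD]
    conv_rhs => rw [hDsum]
    rw [inner_sub_right, inner_sum, inner_sum]
    simp_rw [real_inner_smul_right]
    try rw [← Finset.sum_sub_distrib]
    try rfl
  have hμdiff : (inner ℝ v μ₁ : ℝ) - (inner ℝ v μ₂ : ℝ) = ‖μ₁ - μ₂‖ := by
    rw [← inner_sub_right]
    exact hvD
  have hkey : ‖μ₁ - μ₂‖ * (1 - ρ) = T₁ - T₂ := by
    have e₁ := hsplit μ₁ r₁
    have e₂ := hsplit μ₂ r₂
    rw [← hρdef] at e₁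
    rw [hρ2] at e₂
    rw [← hT₁def] at e₁
    rw [← hT₂def] at e₂
    have hmul : ρ * (inner ℝ v μ₁ : ℝ) - ρ * (inner ℝ v μ₂ : ℝ) = ρ * ‖μ₁ - μ₂‖ := by
      rw [← mul_sub, hμdiff]
    have hexp : ‖μ₁ - μ₂‖ * (1 - ρ) = ‖μ₁ - μ₂‖ - ρ * ‖μ₁ - μ₂‖ := by ring
    linarith [e₁, e₂, hmul, hXdiff, hexp]
  -- Cauchy–Schwarz bounds
  have hQbound : ∀ (q : EuclideanSpace ℝ (Fin p) → ℝ) (r : EuclideanSpace ℝ (Fin p) → ℝ)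
      (μ : EuclideanSpace ℝ (Fin p)) (M : Matrix (Fin p) (Fin p) ℝ),
      (∀ x, 0 ≤ r x) → (∀ x, r x ≤ q x) →
      (∀ a b, M a b = ∑ x ∈ s, q x * ((x a - μ a) * (x b - μ b))) →
      (∑ x ∈ s, r x = ρ) →
      |∑ x ∈ s, r x * (inner ℝ v (x - μ) : ℝ)| ≤
        Real.sqrt δ * Real.sqrt ‖Matrix.toEuclideanCLM (𝕜 := ℝ) M‖ := by
    intro q r μ M hr0 hrle hMeq hrsum
    have hcs := cs_aux s r (fun x _ => hr0 x) (fun x => (inner ℝ v (x - μ) : ℝ))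
    have hmono : ∑ x ∈ s, r x * (inner ℝ v (x - μ) : ℝ) ^ 2
        ≤ ∑ x ∈ s, q x * (inner ℝ v (x - μ) : ℝ) ^ 2 :=
      Finset.sum_le_sum fun x _ => mul_le_mul_of_nonneg_right (hrle x) (sq_nonneg _)
    have hqf := quad_form_bound s q μ M hMeq v hv1
    refine le_trans hcs ?_
    rw [hrsum]
    apply mul_le_mul
    · exact Real.sqrt_le_sqrt hρδ
    · exact Real.sqrt_le_sqrt (le_trans hmono hqf)
    · exact Real.sqrt_nonneg _
    · exact Real.sqrt_nonneg _
  have hT₁b : |T₁| ≤ Real.sqrt δ * Real.sqrt ‖Matrix.toEuclideanCLM (𝕜 := ℝ) Cov₁‖ := by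
    rw [hT₁def]
    exact hQbound q₁ r₁ μ₁ Cov₁ hr₁0 hr₁le hCov₁s hρdef.symm
  have hT₂b : |T₂| ≤ Real.sqrt δ * Real.sqrt ‖Matrix.toEuclideanCLM (𝕜 := ℝ) Cov₂‖ := by
    rw [hT₂def]
    exact hQbound q₂ r₂ μ₂ Cov₂ hr₂0 hr₂le hCov₂s hρ2
  -- assemble
  have hfinal : ‖μ₁ - μ₂‖ * (1 - Real.sqrt δ)
      ≤ Real.sqrt δ * (Real.sqrt ‖Matrix.toEuclideanCLM (𝕜 := ℝ) Cov₁‖ +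
          Real.sqrt ‖Matrix.toEuclideanCLM (𝕜 := ℝ) Cov₂‖) := by
    have hmono : ‖μ₁ - μ₂‖ * (1 - Real.sqrt δ) ≤ ‖μ₁ - μ₂‖ * (1 - ρ) :=
      mul_le_mul_of_nonneg_left (by linarith) (norm_nonneg _)
    rw [mul_add]
    have := le_abs_self T₁
    have := neg_abs_le T₂
    linarith [hkey]
  rw [div_mul_eq_mul_div, le_div_iff₀ (by linarith : (0:ℝ) < 1 - Real.sqrt δ)]
  linarith [hfinal]
end

section
/- Let S be a finite set of n points in ℝ^p with sample mean θ_S and sample covariance Σ_S, and let G ⊆ S with |G| = n_G, sample mean θ_G and sample covariance Σ_G. Let v be the top unit-norm eigenvector of Σ_S and define scores τ_i = (v^T(x_i - θ_S))². If ‖Σ_S‖₂ > ((1+ψ)/(n/(n_G γ) - ψ)) ‖Σ_G‖₂, where ψ = (1/(√(n/(n-n_G)) - 1))² and ψ < n/(n_G γ), then Σ_{i: x_i ∈ G} τ_i < (1/γ) Σ_{j=1}^n τ_j. -/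
open MeasureTheory

/-- Sample mean of the points indexed by a finite set `w`. -/
noncomputable def sampleMean {n p : ℕ} (x : Fin n → EuclideanSpace ℝ (Fin p))
    (w : Finset (Fin n)) : EuclideanSpace ℝ (Fin p) :=
  (w.card : ℝ)⁻¹ • ∑ i ∈ w, x i

/-- Sample covariance matrix of the points indexed by a finite set `w`. -/
noncomputable def sampleCov {n p : ℕ} (x : Fin n → EuclideanSpace ℝ (Fin p))
    (w : Finset (Fin n)) : Matrix (Fin p) (Fin p) ℝ :=
  Matrix.of fun a b =>
    (w.card : ℝ)⁻¹ * ∑ i ∈ w, (x i a - sampleMean x w a) * (x i b - sampleMean x w b)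

lemma aux_inner_sub_apply {n p : ℕ} (x : Fin n → EuclideanSpace ℝ (Fin p))
    (w : Finset (Fin n)) (v : EuclideanSpace ℝ (Fin p)) (i : Fin n) :
    (inner ℝ v (x i - sampleMean x w) : ℝ) = ∑ a, v a * (x i a - sampleMean x w a) := by
  simp [PiLp.inner_apply, RCLike.inner_apply, mul_comm]

lemma aux_sum_sum_comm3 {α β : Type*} [Fintype β] (s : Finset α) (F : β → β → α → ℝ) :
    ∑ a, ∑ b, ∑ i ∈ s, F a b i = ∑ i ∈ s, ∑ a, ∑ b, F a b i :=
  calc ∑ a, ∑ b, ∑ i ∈ s, F a b i = ∑ a, ∑ i ∈ s, ∑ b, F a b i :=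
        Finset.sum_congr rfl fun _ _ => Finset.sum_comm
    _ = ∑ i ∈ s, ∑ a, ∑ b, F a b i := Finset.sum_comm

lemma aux_quad_form_eq {n p : ℕ} (x : Fin n → EuclideanSpace ℝ (Fin p))
    (w : Finset (Fin n)) (v : EuclideanSpace ℝ (Fin p)) :
    (∑ a, ∑ b, v a * sampleCov x w a b * v b)
      = (w.card : ℝ)⁻¹ * ∑ i ∈ w, (inner ℝ v (x i - sampleMean x w) : ℝ) ^ 2 := by
  simp only [aux_inner_sub_apply, sampleCov, Matrix.of_apply]
  have L : ∀ a b, v a * ((w.card : ℝ)⁻¹ * ∑ i ∈ w, (x i a - sampleMean x w a) * (x i b - sampleMean x w b)) * v b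
      = ∑ i ∈ w, (w.card : ℝ)⁻¹ * ((v a * (x i a - sampleMean x w a)) * (v b * (x i b - sampleMean x w b))) := by
    intro a b
    rw [Finset.mul_sum, Finset.mul_sum, Finset.sum_mul]
    exact Finset.sum_congr rfl fun i _ => by ring
  simp only [L]
  have R : ∀ i, (w.card : ℝ)⁻¹ * (∑ a, v a * (x i a - sampleMean x w a)) ^ 2
      = ∑ a, ∑ b, (w.card : ℝ)⁻¹ * ((v a * (x i a - sampleMean x w a)) * (v b * (x i b - sampleMean x w b))) := by
    intro i
    rw [sq, Finset.sum_mul_sum, Finset.mul_sum]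
    exact Finset.sum_congr rfl fun a _ => by rw [Finset.mul_sum]
  rw [Finset.mul_sum]
  simp only [R]
  exact aux_sum_sum_comm3 w fun a b i =>
    (w.card : ℝ)⁻¹ * ((v a * (x i a - sampleMean x w a)) * (v b * (x i b - sampleMean x w b)))

lemma aux_quad_le_opNorm {p : ℕ} (M : Matrix (Fin p) (Fin p) ℝ)
    (v : EuclideanSpace ℝ (Fin p)) (hv : ‖v‖ = 1) :
    (∑ a, ∑ b, v a * M a b * v b) ≤ ‖Matrix.toEuclideanCLM (𝕜 := ℝ) M‖ := by
  have h1 : (∑ a, ∑ b, v a * M a b * v b) = inner ℝ v (Matrix.toEuclideanCLM (𝕜 := ℝ) M v) := by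
    have hap : ∀ a, (Matrix.toEuclideanCLM (𝕜 := ℝ) M) v a = M.mulVec v a := fun _ => rfl
    simp only [PiLp.inner_apply, RCLike.inner_apply, conj_trivial, hap, Matrix.mulVec,
      dotProduct, Finset.mul_sum, Finset.sum_mul]
    exact Finset.sum_congr rfl fun a _ => Finset.sum_congr rfl fun b _ => by ring
  rw [h1]
  calc inner ℝ v (Matrix.toEuclideanCLM (𝕜 := ℝ) M v) ≤ ‖v‖ * ‖Matrix.toEuclideanCLM (𝕜 := ℝ) M v‖ :=
        real_inner_le_norm _ _
    _ ≤ ‖v‖ * (‖Matrix.toEuclideanCLM (𝕜 := ℝ) M‖ * ‖v‖) := by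
        gcongr; exact ContinuousLinearMap.le_opNorm _ _
    _ = ‖Matrix.toEuclideanCLM (𝕜 := ℝ) M‖ := by rw [hv]; ring

lemma aux_sum_dev_eq_zero {n p : ℕ} (x : Fin n → EuclideanSpace ℝ (Fin p))
    (w : Finset (Fin n)) (hw : 0 < w.card) (v : EuclideanSpace ℝ (Fin p)) :
    ∑ i ∈ w, (inner ℝ v (x i - sampleMean x w) : ℝ) = 0 := by
  have h : ∑ i ∈ w, (x i - sampleMean x w) = 0 := by
    rw [Finset.sum_sub_distrib, Finset.sum_const, sampleMean,
      ← Nat.cast_smul_eq_nsmul ℝ, smul_smul,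
      mul_inv_cancel₀ (by positivity : (w.card : ℝ) ≠ 0), one_smul, sub_self]
  rw [← inner_sum, h, inner_zero_right]

lemma aux_psi (N Mc : ℝ) (hM : 0 < Mc) (hNM : Mc < N) :
    N - Mc < Mc * (1 / (Real.sqrt (N / (N - Mc)) - 1)) ^ 2 := by
  have hBc : 0 < N - Mc := by linarith
  have hN : 0 < N := lt_trans hM hNM
  set s : ℝ := Real.sqrt (N / (N - Mc)) with hsdef
  have hs1 : 1 < s := by
    rw [hsdef]
    have h1 : (1 : ℝ) < N / (N - Mc) := by
      rw [lt_div_iff₀ hBc]; linarith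
    have := Real.sqrt_lt_sqrt (by norm_num) h1
    rwa [Real.sqrt_one] at this
  have hs2 : (N - Mc) * s ^ 2 = N := by
    rw [hsdef, Real.sq_sqrt (by positivity : 0 ≤ N / (N - Mc))]
    field_simp
  have h1 : (N - Mc) * (s - 1) ^ 2 < Mc := by
    nlinarith [mul_pos hBc (by linarith : (0:ℝ) < s - 1)]
  have h2 : (0 : ℝ) < (s - 1) ^ 2 := pow_pos (by linarith : (0:ℝ) < s - 1) 2
  rw [div_pow, one_pow, mul_div_assoc' Mc 1, mul_one, lt_div_iff₀ h2]
  linarith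

lemma aux_scalar (N Mc γ ψ q δ T R : ℝ) (hM : 0 < Mc) (hNM : Mc < N) (hγ : 1 < γ)
    (hψBc : N - Mc < Mc * ψ) (hψN : Mc * γ * ψ < N) (hq0 : 0 ≤ q)
    (hTe : T = Mc * q + Mc * δ ^ 2)
    (hCS : (Mc * δ) ^ 2 ≤ (N - Mc) * R)
    (h4 : N * (Mc * γ) * ((1 + ψ) * q) < (N - Mc * γ * ψ) * (T + R)) :
    γ * T < T + R := by
  have hN : 0 < N := lt_trans hM hNM
  have hγ0 : 0 < γ := by linarith
  have hBc : 0 < N - Mc := by linarith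
  have hP : 0 < N - Mc * γ * ψ := by linarith
  have hψ0 : 0 ≤ ψ := by nlinarith
  have hE : 0 < N - γ * (N - Mc) := by nlinarith [mul_lt_mul_of_pos_left hψBc hγ0]
  have hbr : 0 ≤ N ^ 2 - γ * (N * (N - Mc) - Mc ^ 2) := by
    nlinarith [mul_nonneg (by linarith : (0:ℝ) ≤ N + Mc) (le_of_lt hE),
      mul_nonneg (mul_nonneg (le_of_lt hN) (le_of_lt hM)) (by linarith : (0:ℝ) ≤ γ - 1)]
  have u1 : 0 ≤ γ * (N - Mc * γ * ψ) * ((N - Mc) * R - (Mc * δ) ^ 2) :=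
    mul_nonneg (by positivity) (by linarith)
  have u2 : 0 < (N - γ * (N - Mc)) *
      ((N - Mc * γ * ψ) * (T + R) - N * (Mc * γ) * ((1 + ψ) * q)) :=
    mul_pos hE (by linarith)
  have u3 : 0 ≤ γ * (((Mc * ψ - (N - Mc)) * (N ^ 2 - γ * (N * (N - Mc) - Mc ^ 2))) * q) :=
    mul_nonneg (le_of_lt hγ0) (mul_nonneg (mul_nonneg (by linarith) hbr) hq0)
  have u4 : 0 ≤ γ * (((N - Mc) * (N + Mc) * (N - γ * (N - Mc))) * q) :=
    mul_nonneg (le_of_lt hγ0)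
      (mul_nonneg (mul_nonneg (mul_nonneg (le_of_lt hBc) (by linarith)) (le_of_lt hE)) hq0)
  have key : N * (N - Mc * γ * ψ) * (R - (γ - 1) * T)
      = γ * (N - Mc * γ * ψ) * ((N - Mc) * R - (Mc * δ) ^ 2)
        + (N - γ * (N - Mc)) *
          ((N - Mc * γ * ψ) * (T + R) - N * (Mc * γ) * ((1 + ψ) * q))
        + γ * (((Mc * ψ - (N - Mc)) * (N ^ 2 - γ * (N * (N - Mc) - Mc ^ 2))) * q)
        + γ * (((N - Mc) * (N + Mc) * (N - γ * (N - Mc))) * q) := by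
    rw [hTe]; ring
  have hS : 0 < N * (N - Mc * γ * ψ) * (R - (γ - 1) * T) := by
    rw [key]; linarith
  have hNP : 0 < N * (N - Mc * γ * ψ) := mul_pos hN hP
  by_contra hcon
  push_neg at hcon
  have h5 : R - (γ - 1) * T ≤ 0 := by nlinarith
  nlinarith [mul_nonneg (le_of_lt hNP) (by linarith : 0 ≤ -(R - (γ - 1) * T))]

set_option maxHeartbeats 1000000 in
/-- If the spectral norm of the full sample covariance is large compared to that of the
covariance of the subset `G`, then the scores of the points in `G` (projections onto the
top eigenvector) account for less than a `1/γ` fraction of the total score. -/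
theorem filtering_score_bound
    {n p : ℕ} (x : Fin n → EuclideanSpace ℝ (Fin p))
    (G : Finset (Fin n)) (γ : ℝ) (hγ : 1 < γ)
    (hG : 0 < G.card) (hGn : G.card < n)
    (v : EuclideanSpace ℝ (Fin p)) (hv : ‖v‖ = 1)
    (hev : (∑ a, ∑ b, v a * sampleCov x Finset.univ a b * v b) =
      ‖Matrix.toEuclideanCLM (𝕜 := ℝ) (sampleCov x Finset.univ)‖)
    (hψ : (1 / (Real.sqrt ((n : ℝ) / ((n : ℝ) - G.card)) - 1)) ^ 2 <
      (n : ℝ) / (G.card * γ))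
    (hgap : ((1 + (1 / (Real.sqrt ((n : ℝ) / ((n : ℝ) - G.card)) - 1)) ^ 2) /
        ((n : ℝ) / (G.card * γ) -
          (1 / (Real.sqrt ((n : ℝ) / ((n : ℝ) - G.card)) - 1)) ^ 2)) *
        ‖Matrix.toEuclideanCLM (𝕜 := ℝ) (sampleCov x G)‖ <
      ‖Matrix.toEuclideanCLM (𝕜 := ℝ) (sampleCov x Finset.univ)‖) :
    (∑ i ∈ G, (inner ℝ v (x i - sampleMean x Finset.univ) : ℝ) ^ 2) <
      (1 / γ) * ∑ j, (inner ℝ v (x j - sampleMean x Finset.univ) : ℝ) ^ 2 := by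
  classical
  set N : ℝ := (n : ℝ) with hNdef
  set Mc : ℝ := (G.card : ℝ) with hMdef
  have hM : 0 < Mc := by rw [hMdef]; exact_mod_cast hG
  have hNM : Mc < N := by rw [hMdef, hNdef]; exact_mod_cast hGn
  have hN : 0 < N := lt_trans hM hNM
  have hBc : 0 < N - Mc := by linarith
  have hγ0 : 0 < γ := lt_trans one_pos hγ
  set s : ℝ := Real.sqrt (N / (N - Mc)) with hsdef
  set ψ : ℝ := (1 / (s - 1)) ^ 2 with hψdef
  set σ : ℝ := ‖Matrix.toEuclideanCLM (𝕜 := ℝ) (sampleCov x Finset.univ)‖ with hσdef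
  set σG : ℝ := ‖Matrix.toEuclideanCLM (𝕜 := ℝ) (sampleCov x G)‖ with hσGdef
  set f : Fin n → ℝ := fun j => (inner ℝ v (x j - sampleMean x Finset.univ) : ℝ) with hfdef
  set g : Fin n → ℝ := fun i => (inner ℝ v (x i - sampleMean x G) : ℝ) with hgdef
  set δ : ℝ := (inner ℝ v (sampleMean x G - sampleMean x Finset.univ) : ℝ) with hδdef
  set T : ℝ := ∑ i ∈ G, f i ^ 2 with hTdef
  set R : ℝ := ∑ i ∈ Gᶜ, f i ^ 2 with hRdef
  -- basic cardinalities
  have hcardU : ((Finset.univ : Finset (Fin n)).card : ℝ) = N := by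
    simp [hNdef]
  have hcardUn : (Finset.univ : Finset (Fin n)).card = n := by simp
  -- total sum splits
  have htotal : (∑ j, f j ^ 2) = T + R := (Finset.sum_add_sum_compl G _).symm
  -- total score equals N * σ
  have hσtot : N * σ = T + R := by
    have h1 := aux_quad_form_eq x Finset.univ v
    rw [hev, hcardU] at h1
    rw [h1, ← mul_assoc, mul_inv_cancel₀ (ne_of_gt hN), one_mul]
    exact htotal
  -- q : quadratic form of the G-covariance
  set q : ℝ := ∑ a, ∑ b, v a * sampleCov x G a b * v b with hqdef
  have hq2 : q = Mc⁻¹ * ∑ i ∈ G, g i ^ 2 := by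
    rw [hqdef, aux_quad_form_eq x G v]
  have hgsq : ∑ i ∈ G, g i ^ 2 = Mc * q := by
    rw [hq2, ← mul_assoc, mul_inv_cancel₀ (ne_of_gt hM), one_mul]
  have hq0 : 0 ≤ q := by
    rw [hq2]
    exact mul_nonneg (inv_nonneg.mpr hM.le) (Finset.sum_nonneg fun i _ => sq_nonneg _)
  have hqσG : q ≤ σG := aux_quad_le_opNorm _ v hv
  have hσG0 : 0 ≤ σG := norm_nonneg _
  -- decomposition f = g + δ on G
  have hfg : ∀ i, f i = g i + δ := by
    intro i
    rw [hfdef, hgdef, hδdef, ← inner_add_right]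
    congr 1
    abel
  have hsumg : ∑ i ∈ G, g i = 0 := aux_sum_dev_eq_zero x G hG v
  have hTe : T = Mc * q + Mc * δ ^ 2 := by
    have h1 : T = ∑ i ∈ G, (g i ^ 2 + (2 * δ) * g i + δ ^ 2) := by
      rw [hTdef]
      exact Finset.sum_congr rfl fun i _ => by rw [hfg i]; ring
    rw [h1, Finset.sum_add_distrib, Finset.sum_add_distrib, ← Finset.mul_sum, hsumg,
      Finset.sum_const, nsmul_eq_mul, hgsq, ← hMdef]
    ring
  -- sums of f
  have hsumfG : ∑ i ∈ G, f i = Mc * δ := by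
    have h1 : ∑ i ∈ G, f i = ∑ i ∈ G, (g i + δ) := Finset.sum_congr rfl fun i _ => hfg i
    rw [h1, Finset.sum_add_distrib, hsumg, Finset.sum_const, nsmul_eq_mul, ← hMdef]
    ring
  have hsumtot : ∑ j, f j = 0 := by
    apply aux_sum_dev_eq_zero x Finset.univ _ v
    rw [hcardUn]; omega
  have hsumfB : ∑ i ∈ Gᶜ, f i = -(Mc * δ) := by
    have h1 := Finset.sum_add_sum_compl G f
    rw [hsumtot, hsumfG] at h1
    linarith
  -- Cauchy-Schwarz on the complement
  have hcardB : ((Gᶜ : Finset (Fin n)).card : ℝ) = N - Mc := by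
    rw [Finset.card_compl, Fintype.card_fin, Nat.cast_sub (le_of_lt hGn)]
  have hCS : (Mc * δ) ^ 2 ≤ (N - Mc) * R := by
    have h := sq_sum_le_card_mul_sum_sq (s := Gᶜ) (f := f)
    rw [hsumfB, hcardB] at h
    rw [← hRdef] at h
    simpa using h
  -- properties of ψ
  have hψBc : N - Mc < Mc * ψ := by
    have := aux_psi N Mc hM hNM
    rw [← hsdef, ← hψdef] at this
    exact this
  have hψN : Mc * γ * ψ < N := by
    have h1 := (lt_div_iff₀ (mul_pos hM hγ0)).mp hψ
    linarith
  -- rearranged gap hypothesis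
  have hD : 0 < N / (Mc * γ) - ψ := by linarith [hψ]
  have hgap2 : (1 + ψ) * q < (N / (Mc * γ) - ψ) * σ := by
    have h1 : (1 + ψ) * σG < (N / (Mc * γ) - ψ) * σ := by
      have h2 := hgap
      rw [div_mul_eq_mul_div, div_lt_iff₀ hD] at h2
      calc (1 + ψ) * σG < σ * (N / (Mc * γ) - ψ) := h2
        _ = (N / (Mc * γ) - ψ) * σ := by ring
    have hψ0 : (0:ℝ) ≤ 1 + ψ := by positivity
    calc (1 + ψ) * q ≤ (1 + ψ) * σG := mul_le_mul_of_nonneg_left hqσG hψ0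
      _ < _ := h1
  -- polynomial form of the gap
  have h4 : N * (Mc * γ) * ((1 + ψ) * q) < (N - Mc * γ * ψ) * (T + R) := by
    have h1 := mul_lt_mul_of_pos_left hgap2 (mul_pos hN (mul_pos hM hγ0))
    have h2 : N * (Mc * γ) * ((N / (Mc * γ) - ψ) * σ) = (N - Mc * γ * ψ) * (N * σ) := by
      field_simp
    rw [h2, hσtot] at h1
    exact h1
  -- final scalar inequality
  have hfin : γ * T < T + R :=
    aux_scalar N Mc γ ψ q δ T R hM hNM hγ hψBc hψN hq0 hTe hCS h4
  rw [htotal, div_mul_eq_mul_div, one_mul, lt_div_iff₀ hγ0]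
  linarith
end

section
/- Let S be a finite set of n points in ℝ^p, G ⊆ S with |G| = n_G, sample means θ_S, θ_G and sample covariances Σ_S, Σ_G. Then ‖θ_G - θ_S‖₂ ≤ (1/(√(n/(n-n_G)) - 1)) (‖Σ_S‖₂^{1/2} + ‖Σ_G‖₂^{1/2}). -/
open MeasureTheory

lemma qform_aux {n p : ℕ} (x : Fin n → EuclideanSpace ℝ (Fin p)) (w : Finset (Fin n))
    (d : EuclideanSpace ℝ (Fin p)) :
    (inner ℝ (Matrix.toEuclideanCLM (𝕜 := ℝ) (sampleCov x w) d) d : ℝ) =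
      (w.card : ℝ)⁻¹ * ∑ i ∈ w, (inner ℝ (x i - sampleMean x w) d : ℝ) ^ 2 := by
  have happ : ∀ a, (Matrix.toEuclideanCLM (𝕜 := ℝ) (sampleCov x w) d) a
      = ∑ b, (sampleCov x w) a b * d b := by
    intro a
    have h := congrFun (Matrix.ofLp_toEuclideanCLM (𝕜 := ℝ) (sampleCov x w) d) a
    simpa [Matrix.mulVec, dotProduct] using h
  have hinner : ∀ (u v : EuclideanSpace ℝ (Fin p)), (inner ℝ u v : ℝ) = ∑ a, u a * v a := by
    intro u v; simp [PiLp.inner_apply, RCLike.inner_apply, conj_trivial, mul_comm]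
  set y : Fin n → Fin p → ℝ := fun i a => x i a - sampleMean x w a with hy
  have hrow : ∀ a : Fin p, (∑ b, (sampleCov x w) a b * d b) * d a
      = ∑ i ∈ w, (w.card : ℝ)⁻¹ * ((y i a * d a) * ∑ b, y i b * d b) := by
    intro a
    simp only [sampleCov, Matrix.of_apply, Finset.sum_mul, Finset.mul_sum, ← hy]
    rw [Finset.sum_comm]
    exact Finset.sum_congr rfl fun i _ => Finset.sum_congr rfl fun b _ => by ring
  calc (inner ℝ (Matrix.toEuclideanCLM (𝕜 := ℝ) (sampleCov x w) d) d : ℝ)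
      = ∑ a, (∑ b, (sampleCov x w) a b * d b) * d a := by
        rw [hinner]; exact Finset.sum_congr rfl fun a _ => by rw [happ]
    _ = ∑ a, ∑ i ∈ w, (w.card : ℝ)⁻¹ * ((y i a * d a) * ∑ b, y i b * d b) :=
        Finset.sum_congr rfl fun a _ => hrow a
    _ = ∑ i ∈ w, ∑ a, (w.card : ℝ)⁻¹ * ((y i a * d a) * ∑ b, y i b * d b) := Finset.sum_comm
    _ = (w.card : ℝ)⁻¹ * ∑ i ∈ w, (inner ℝ (x i - sampleMean x w) d : ℝ) ^ 2 := by
        rw [Finset.mul_sum]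
        refine Finset.sum_congr rfl fun i _ => ?_
        rw [hinner]
        have : ∀ b, ((x i - sampleMean x w) b) = y i b := fun b => rfl
        simp only [this]
        rw [← Finset.mul_sum, ← Finset.sum_mul, sq]

lemma arith_aux (N b c : ℝ) (hb : 0 < b) (hbN : b < N) (hcb : c = N - b) :
    Real.sqrt (b * N) / c ≤ 1 / (Real.sqrt (N / b) - 1) := by
  have hsb : 0 < Real.sqrt b := Real.sqrt_pos.2 hb
  have hsN : Real.sqrt b < Real.sqrt N := Real.sqrt_lt_sqrt hb.le hbN
  have e1 : Real.sqrt N ^ 2 = N := Real.sq_sqrt (by linarith)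
  have e2 : Real.sqrt b ^ 2 = b := Real.sq_sqrt hb.le
  have h1 : Real.sqrt (N / b) = Real.sqrt N / Real.sqrt b :=
    Real.sqrt_div (by linarith) b
  have hden : 0 < Real.sqrt (N / b) - 1 := by
    rw [h1]; rw [sub_pos, lt_div_iff₀ hsb]; linarith
  have hcpos : 0 < c := by nlinarith
  rw [div_le_div_iff₀ hcpos hden, h1, Real.sqrt_mul hb.le]
  have key : Real.sqrt b * Real.sqrt N * (Real.sqrt N / Real.sqrt b - 1)
      = N - Real.sqrt N * Real.sqrt b := by
    field_simp
    nlinarith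
  rw [key]
  nlinarith [mul_pos hsb (sub_pos.2 hsN)]

lemma den_pos_aux (N b : ℝ) (hb : 0 < b) (hbN : b < N) :
    0 < Real.sqrt (N / b) - 1 := by
  have hsb : 0 < Real.sqrt b := Real.sqrt_pos.2 hb
  have hsN : Real.sqrt b < Real.sqrt N := Real.sqrt_lt_sqrt hb.le hbN
  rw [Real.sqrt_div (by linarith) b, sub_pos, lt_div_iff₀ hsb]; linarith

/-- The sample mean of a subset `G` of a sample `S` is close to the sample mean of `S`,
at a scale governed by the spectral norms of the two sample covariances. -/
theorem subset_mean_control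
    {n p : ℕ} (x : Fin n → EuclideanSpace ℝ (Fin p))
    (G : Finset (Fin n)) (hG : 0 < G.card) (hGn : G.card < n) :
    ‖sampleMean x G - sampleMean x Finset.univ‖ ≤
      (1 / (Real.sqrt ((n : ℝ) / ((n : ℝ) - G.card)) - 1)) *
        (Real.sqrt ‖Matrix.toEuclideanCLM (𝕜 := ℝ) (sampleCov x Finset.univ)‖ +
         Real.sqrt ‖Matrix.toEuclideanCLM (𝕜 := ℝ) (sampleCov x G)‖) := by
  set μ := sampleMean x Finset.univ with hμdef
  set d := sampleMean x G - μ with hddef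
  set M := Matrix.toEuclideanCLM (𝕜 := ℝ) (sampleCov x (Finset.univ : Finset (Fin n)))
    with hMdef
  have hn0 : 0 < n := hG.trans hGn
  have hc : (0:ℝ) < G.card := by exact_mod_cast hG
  have hNcast : ((Finset.univ : Finset (Fin n)).card : ℝ) = (n : ℝ) := by
    simp [Finset.card_univ]
  have hb : (0:ℝ) < (n : ℝ) - G.card := by
    have : (G.card : ℝ) < n := by exact_mod_cast hGn
    linarith
  -- the denominator is positive
  have hden : 0 < Real.sqrt ((n : ℝ) / ((n : ℝ) - G.card)) - 1 := by
    refine den_pos_aux _ _ hb ?_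
    linarith
  -- step 1 : (G.card) • d = ∑_{i ∈ G} (x i - μ)
  have h1 : (G.card : ℝ) • d = ∑ i ∈ G, (x i - μ) := by
    rw [hddef, smul_sub, sampleMean, smul_inv_smul₀ hc.ne']
    rw [Finset.sum_sub_distrib, Finset.sum_const]
    rw [Nat.cast_smul_eq_nsmul]
  -- step 2 : ∑_{i} (x i - μ) = 0
  have h2 : ∑ i : Fin n, (x i - μ) = 0 := by
    rw [Finset.sum_sub_distrib, Finset.sum_const, hμdef, sampleMean,
      ← Nat.cast_smul_eq_nsmul ℝ, smul_inv_smul₀ (by rw [hNcast]; positivity)]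
    simp
  -- step 3
  have h3 : ∑ i ∈ G, (x i - μ) = - ∑ i ∈ Gᶜ, (x i - μ) := by
    have h := Finset.sum_add_sum_compl G (fun i => x i - μ)
    rw [h2] at h
    exact eq_neg_of_add_eq_zero_left h
  -- energy identity
  have hA : (G.card : ℝ) * ‖d‖ ^ 2 = - ∑ i ∈ Gᶜ, (inner ℝ (x i - μ) d : ℝ) := by
    have : (G.card : ℝ) * ‖d‖ ^ 2 = (inner ℝ ((G.card : ℝ) • d) d : ℝ) := by
      rw [real_inner_smul_left, real_inner_self_eq_norm_sq]
    rw [this, h1, h3, inner_neg_left, sum_inner]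
  -- Cauchy-Schwarz over the complement
  have hA2 : (∑ i ∈ Gᶜ, (inner ℝ (x i - μ) d : ℝ)) ^ 2 ≤
      (Gᶜ.card : ℝ) * ∑ i ∈ Gᶜ, (inner ℝ (x i - μ) d : ℝ) ^ 2 :=
    sq_sum_le_card_mul_sum_sq
  have hsub : ∑ i ∈ Gᶜ, (inner ℝ (x i - μ) d : ℝ) ^ 2 ≤
      ∑ i : Fin n, (inner ℝ (x i - μ) d : ℝ) ^ 2 :=
    Finset.sum_le_sum_of_subset_of_nonneg (Finset.subset_univ _)
      (fun i _ _ => sq_nonneg _)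
  -- quadratic form identity and operator norm bound
  have hQ : ∑ i : Fin n, (inner ℝ (x i - μ) d : ℝ) ^ 2 = (n : ℝ) * (inner ℝ (M d) d : ℝ) := by
    rw [hMdef, qform_aux, hNcast, ← mul_assoc, mul_inv_cancel₀ (by positivity), one_mul]
  have hQle : (inner ℝ (M d) d : ℝ) ≤ ‖M‖ * ‖d‖ ^ 2 := by
    calc (inner ℝ (M d) d : ℝ) ≤ ‖M d‖ * ‖d‖ := real_inner_le_norm _ _
      _ ≤ (‖M‖ * ‖d‖) * ‖d‖ := by
          gcongr
          exact M.le_opNorm d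
      _ = ‖M‖ * ‖d‖ ^ 2 := by ring
  have hcomplcard : ((Gᶜ : Finset (Fin n)).card : ℝ) = (n : ℝ) - G.card := by
    rw [Finset.card_compl]
    simp [Nat.cast_sub hGn.le]
  -- key inequality
  have key : ((G.card : ℝ) * ‖d‖ ^ 2) ^ 2 ≤
      ((n : ℝ) - G.card) * ((n : ℝ) * (‖M‖ * ‖d‖ ^ 2)) := by
    rw [hA, neg_sq]
    calc (∑ i ∈ Gᶜ, (inner ℝ (x i - μ) d : ℝ)) ^ 2
        ≤ (Gᶜ.card : ℝ) * ∑ i ∈ Gᶜ, (inner ℝ (x i - μ) d : ℝ) ^ 2 := hA2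
      _ ≤ (Gᶜ.card : ℝ) * ∑ i : Fin n, (inner ℝ (x i - μ) d : ℝ) ^ 2 := by
          exact mul_le_mul_of_nonneg_left hsub (by positivity)
      _ = ((n : ℝ) - G.card) * ((n : ℝ) * (inner ℝ (M d) d : ℝ)) := by
          rw [hcomplcard, hQ]
      _ ≤ ((n : ℝ) - G.card) * ((n : ℝ) * (‖M‖ * ‖d‖ ^ 2)) := by
          have hnR : (0:ℝ) < (n : ℝ) := by positivity
          have hsum : (0:ℝ) ≤ (n : ℝ) * (inner ℝ (M d) d : ℝ) := by
            rw [← hQ]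
            exact Finset.sum_nonneg fun i _ => sq_nonneg _
          have hMd : (0:ℝ) ≤ (inner ℝ (M d) d : ℝ) := nonneg_of_mul_nonneg_right hsum hnR
          gcongr
  have h9 : (0:ℝ) ≤ 1 / (Real.sqrt ((n : ℝ) / ((n : ℝ) - G.card)) - 1) :=
    one_div_nonneg.mpr hden.le
  rcases eq_or_lt_of_le (norm_nonneg d) with hd0 | hdpos
  · rw [← hd0]
    exact mul_nonneg h9 (by positivity)
  · -- divide through
    have h5 : ((G.card : ℝ) * ‖d‖) ^ 2 ≤ (((n : ℝ) - G.card) * n) * ‖M‖ := by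
      nlinarith [key, pow_pos hdpos 2]
    have h6 : (G.card : ℝ) * ‖d‖ ≤ Real.sqrt ((((n : ℝ) - G.card) * n) * ‖M‖) := by
      have := Real.sqrt_le_sqrt h5
      rwa [Real.sqrt_sq (by positivity)] at this
    have h7 : ‖d‖ ≤ (Real.sqrt (((n : ℝ) - G.card) * n) / G.card) * Real.sqrt ‖M‖ := by
      rw [Real.sqrt_mul (by positivity)] at h6
      rw [div_mul_eq_mul_div, le_div_iff₀ hc]
      linarith [h6]
    have h8 : Real.sqrt (((n : ℝ) - G.card) * n) / G.card ≤
        1 / (Real.sqrt ((n : ℝ) / ((n : ℝ) - G.card)) - 1) := by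
      refine arith_aux (n : ℝ) ((n : ℝ) - G.card) (G.card : ℝ) hb (by linarith) (by ring)
    calc ‖d‖ ≤ (Real.sqrt (((n : ℝ) - G.card) * n) / G.card) * Real.sqrt ‖M‖ := h7
      _ ≤ (1 / (Real.sqrt ((n : ℝ) / ((n : ℝ) - G.card)) - 1)) * Real.sqrt ‖M‖ := by
          exact mul_le_mul_of_nonneg_right h8 (Real.sqrt_nonneg _)
      _ ≤ (1 / (Real.sqrt ((n : ℝ) / ((n : ℝ) - G.card)) - 1)) *
          (Real.sqrt ‖M‖ +
            Real.sqrt ‖Matrix.toEuclideanCLM (𝕜 := ℝ) (sampleCov x G)‖) := by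
          exact mul_le_mul_of_nonneg_left
            (le_add_of_nonneg_right (Real.sqrt_nonneg _)) h9
end
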